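/- Let a, b, c₁, c₂ : ℝ → ℝ with a(x) > 0 for all x, let λ₁, λ₂ ∈ ℝ and θ ∈ [0,1]. Suppose φ₁, φ₂ : ℝ → ℝ are twice differentiable, strictly positive, and satisfy a·φᵢ'' + b·φᵢ' + (cᵢ + λᵢ)·φᵢ ≤ 0 pointwise for i = 1, 2. Then f := φ₁^θ · φ₂^(1-θ) is strictly positive and satisfies a·f'' + b·f' + (θc₁ + (1-θ)c₂ + θλ₁ + (1-θ)λ₂)·f ≤ 0 pointwise. -/

import Mathlib

private lemma aux_bracket (a b u v A₁ A₂ d₁ d₂ θ : ℝ) (ha : 0 < a)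
    (hθ0 : 0 ≤ θ) (hθ1 : θ ≤ 1)
    (h1 : a * A₁ + b * u + d₁ ≤ 0) (h2 : a * A₂ + b * v + d₂ ≤ 0) :
    a * ((θ * u + (1 - θ) * v) ^ 2 + (θ * (A₁ - u ^ 2) + (1 - θ) * (A₂ - v ^ 2)))
      + b * (θ * u + (1 - θ) * v) + (θ * d₁ + (1 - θ) * d₂) ≤ 0 := by
  have hθ1' : 0 ≤ 1 - θ := by linarith
  nlinarith [mul_nonneg hθ0 (neg_nonneg.2 h1), mul_nonneg hθ1' (neg_nonneg.2 h2),
    mul_nonneg (mul_nonneg (mul_nonneg ha.le hθ0) hθ1') (sq_nonneg (u - v))]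

theorem stmt_7 (a b c₁ c₂ : ℝ → ℝ) (ha : ∀ x, 0 < a x)
    (lam₁ lam₂ θ : ℝ) (hθ0 : 0 ≤ θ) (hθ1 : θ ≤ 1)
    (φ₁ φ₂ : ℝ → ℝ)
    (h1 : ∀ x, DifferentiableAt ℝ φ₁ x) (h1' : ∀ x, DifferentiableAt ℝ (deriv φ₁) x)
    (h2 : ∀ x, DifferentiableAt ℝ φ₂ x) (h2' : ∀ x, DifferentiableAt ℝ (deriv φ₂) x)
    (hp1 : ∀ x, 0 < φ₁ x) (hp2 : ∀ x, 0 < φ₂ x)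
    (hs1 : ∀ x, a x * deriv (deriv φ₁) x + b x * deriv φ₁ x + (c₁ x + lam₁) * φ₁ x ≤ 0)
    (hs2 : ∀ x, a x * deriv (deriv φ₂) x + b x * deriv φ₂ x + (c₂ x + lam₂) * φ₂ x ≤ 0)
    (f : ℝ → ℝ) (hf : ∀ x, f x = (φ₁ x) ^ θ * (φ₂ x) ^ (1 - θ)) :
    (∀ x, 0 < f x) ∧
    (∀ x, a x * deriv (deriv f) x + b x * deriv f x
        + (θ * c₁ x + (1 - θ) * c₂ x + θ * lam₁ + (1 - θ) * lam₂) * f x ≤ 0) := by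
  have hfpos : ∀ x, 0 < f x := fun x => by
    rw [hf x]
    exact mul_pos (Real.rpow_pos_of_pos (hp1 x) θ) (Real.rpow_pos_of_pos (hp2 x) (1 - θ))
  -- the logarithmic derivative
  set g : ℝ → ℝ := fun x => θ * (deriv φ₁ x / φ₁ x) + (1 - θ) * (deriv φ₂ x / φ₂ x) with hg
  have hfd : ∀ x, HasDerivAt f (f x * g x) x := by
    intro x
    have hfe : f = fun y => (φ₁ y) ^ θ * (φ₂ y) ^ (1 - θ) := funext hf
    have d1 : HasDerivAt (fun y => (φ₁ y) ^ θ) (deriv φ₁ x * θ * (φ₁ x) ^ (θ - 1)) x :=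
      (h1 x).hasDerivAt.rpow_const (Or.inl (hp1 x).ne')
    have d2 : HasDerivAt (fun y => (φ₂ y) ^ (1 - θ)) (deriv φ₂ x * (1 - θ) * (φ₂ x) ^ (1 - θ - 1)) x :=
      (h2 x).hasDerivAt.rpow_const (Or.inl (hp2 x).ne')
    have : HasDerivAt (fun y => (φ₁ y) ^ θ * (φ₂ y) ^ (1 - θ)) _ x := d1.mul d2
    rw [← hfe] at this
    convert this using 1
    rw [hf x, Real.rpow_sub_one (hp1 x).ne', Real.rpow_sub_one (hp2 x).ne']
    field_simp
    ring
  have hderiv : deriv f = fun x => f x * g x := funext fun x => (hfd x).deriv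
  refine ⟨hfpos, fun x => ?_⟩
  -- derivative of g
  have hgd : HasDerivAt g
      (θ * ((deriv (deriv φ₁) x * φ₁ x - deriv φ₁ x * deriv φ₁ x) / (φ₁ x) ^ 2)
        + (1 - θ) * ((deriv (deriv φ₂) x * φ₂ x - deriv φ₂ x * deriv φ₂ x) / (φ₂ x) ^ 2)) x := by
    exact (((h1' x).hasDerivAt.div (h1 x).hasDerivAt (hp1 x).ne').const_mul θ).add
      (((h2' x).hasDerivAt.div (h2 x).hasDerivAt (hp2 x).ne').const_mul (1 - θ))
  have hffd : HasDerivAt (fun y => f y * g y)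
      (f x * g x * g x + f x *
        (θ * ((deriv (deriv φ₁) x * φ₁ x - deriv φ₁ x * deriv φ₁ x) / (φ₁ x) ^ 2)
          + (1 - θ) * ((deriv (deriv φ₂) x * φ₂ x - deriv φ₂ x * deriv φ₂ x) / (φ₂ x) ^ 2))) x :=
    (hfd x).mul hgd
  have hd2 : deriv (deriv f) x = f x * g x * g x + f x *
      (θ * ((deriv (deriv φ₁) x * φ₁ x - deriv φ₁ x * deriv φ₁ x) / (φ₁ x) ^ 2)
        + (1 - θ) * ((deriv (deriv φ₂) x * φ₂ x - deriv φ₂ x * deriv φ₂ x) / (φ₂ x) ^ 2)) := by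
    rw [hderiv]; exact hffd.deriv
  -- abbreviations
  set u := deriv φ₁ x / φ₁ x with hu
  set v := deriv φ₂ x / φ₂ x with hv
  set A₁ := deriv (deriv φ₁) x / φ₁ x with hA1
  set A₂ := deriv (deriv φ₂) x / φ₂ x with hA2
  have e1 : (deriv (deriv φ₁) x * φ₁ x - deriv φ₁ x * deriv φ₁ x) / (φ₁ x) ^ 2 = A₁ - u ^ 2 := by
    rw [hA1, hu]; field_simp [(hp1 x).ne']
  have e2 : (deriv (deriv φ₂) x * φ₂ x - deriv φ₂ x * deriv φ₂ x) / (φ₂ x) ^ 2 = A₂ - v ^ 2 := by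
    rw [hA2, hv]; field_simp [(hp2 x).ne']
  have hS1 : a x * A₁ + b x * u + (c₁ x + lam₁) ≤ 0 := by
    have h := div_nonpos_of_nonpos_of_nonneg (hs1 x) (hp1 x).le
    have heq : (a x * deriv (deriv φ₁) x + b x * deriv φ₁ x + (c₁ x + lam₁) * φ₁ x) / φ₁ x
        = a x * A₁ + b x * u + (c₁ x + lam₁) := by
      rw [hA1, hu]; field_simp [(hp1 x).ne']
    rwa [heq] at h
  have hS2 : a x * A₂ + b x * v + (c₂ x + lam₂) ≤ 0 := by
    have h := div_nonpos_of_nonpos_of_nonneg (hs2 x) (hp2 x).le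
    have heq : (a x * deriv (deriv φ₂) x + b x * deriv φ₂ x + (c₂ x + lam₂) * φ₂ x) / φ₂ x
        = a x * A₂ + b x * v + (c₂ x + lam₂) := by
      rw [hA2, hv]; field_simp [(hp2 x).ne']
    rwa [heq] at h
  have key := aux_bracket (a x) (b x) u v A₁ A₂ (c₁ x + lam₁) (c₂ x + lam₂) θ (ha x) hθ0 hθ1 hS1 hS2
  have hgx : g x = θ * u + (1 - θ) * v := rfl
  have hmul : f x * (a x * ((θ * u + (1 - θ) * v) ^ 2
        + (θ * (A₁ - u ^ 2) + (1 - θ) * (A₂ - v ^ 2)))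
      + b x * (θ * u + (1 - θ) * v) + (θ * (c₁ x + lam₁) + (1 - θ) * (c₂ x + lam₂))) ≤ 0 :=
    mul_nonpos_iff.mpr (Or.inl ⟨(hfpos x).le, key⟩)
  have hderivx : deriv f x = f x * g x := by rw [hderiv]
  rw [hd2, hderivx, e1, e2, hgx]
  nlinarith [hmul]
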